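/- Let (X, I) be a partition of V(G) with I independent, and suppose every independent subset of X has size at most 2k. If u ∈ X has at least 2k neighbors in I, then for every independent set S of G containing u, |S| ≤ |I|; hence the maximum independent set size of G equals the maximum independent set size of G − u or is attained by I itself, and G has an independent set of size ≥ ℓ iff G − u does. -/
import Mathlib


/-- Let `(X, I)` be a partition of `V(G)` with `I` independent, such that every
independent subset of `X` has size at most `2k`. If `u ∈ X` has at least `2k`
neighbors in `I`, then every independent set containing `u` has size at most
`|I|`, and `G` has an independent set of size at least `ℓ` iff it has one
avoiding `u` (i.e. iff `G − u` does). -/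
theorem stmt17 {V : Type*} [Fintype V] [DecidableEq V] (G : SimpleGraph V)
    [DecidableRel G.Adj] (k ℓ : ℕ) (X I : Finset V)
    (hdisj : Disjoint X I) (hunion : X ∪ I = Finset.univ)
    (hI : (I : Set V).Pairwise fun a b => ¬ G.Adj a b)
    (hX : ∀ S : Finset V, S ⊆ X → ((S : Set V).Pairwise fun a b => ¬ G.Adj a b) →
      S.card ≤ 2 * k)
    (u : V) (hu : u ∈ X) (hnbrs : 2 * k ≤ (I.filter (fun v => G.Adj u v)).card) :
    (∀ S : Finset V, ((S : Set V).Pairwise fun a b => ¬ G.Adj a b) → u ∈ S →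
      S.card ≤ I.card) ∧
    ((∃ S : Finset V, ((S : Set V).Pairwise fun a b => ¬ G.Adj a b) ∧ ℓ ≤ S.card) ↔
      (∃ S : Finset V, u ∉ S ∧ ((S : Set V).Pairwise fun a b => ¬ G.Adj a b) ∧
        ℓ ≤ S.card)) := by
  have key : ∀ S : Finset V, ((S : Set V).Pairwise fun a b => ¬ G.Adj a b) → u ∈ S →
      S.card ≤ I.card := by
    intro S hSind huS
    have h1 : (S ∩ X).card ≤ 2 * k := by
      apply hX _ (Finset.inter_subset_right)
      exact hSind.mono (by simp [Finset.coe_inter, Set.inter_subset_left])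
    have h2 : S ∩ I ⊆ I \ (I.filter (fun v => G.Adj u v)) := by
      intro v hv
      simp only [Finset.mem_inter] at hv
      simp only [Finset.mem_sdiff, Finset.mem_filter]
      refine ⟨hv.2, fun h => ?_⟩
      have hne : u ≠ v := fun e => (Finset.disjoint_left.mp hdisj hu) (e ▸ hv.2)
      exact hSind huS (hv.1) hne h.2
    have h3 : (S ∩ I).card ≤ I.card - (I.filter (fun v => G.Adj u v)).card := by
      calc (S ∩ I).card ≤ (I \ (I.filter (fun v => G.Adj u v))).card :=
            Finset.card_le_card h2
        _ = I.card - (I.filter (fun v => G.Adj u v)).card :=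
            Finset.card_sdiff_of_subset (Finset.filter_subset _ _)
    have hfle : (I.filter (fun v => G.Adj u v)).card ≤ I.card :=
      Finset.card_le_card (Finset.filter_subset _ _)
    have hsplit : S.card = (S ∩ X).card + (S ∩ I).card := by
      have hd : Disjoint (S ∩ X) (S ∩ I) :=
        Finset.disjoint_of_subset_left Finset.inter_subset_right
          (Finset.disjoint_of_subset_right Finset.inter_subset_right hdisj)
      rw [← Finset.card_union_of_disjoint hd, ← Finset.inter_union_distrib_left,
        hunion, Finset.inter_univ]
    omega
  refine ⟨key, ?_, ?_⟩
  · rintro ⟨S, hSind, hℓ⟩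
    by_cases huS : u ∈ S
    · exact ⟨I, fun h => (Finset.disjoint_left.mp hdisj hu) h, hI,
        le_trans hℓ (key S hSind huS)⟩
    · exact ⟨S, huS, hSind, hℓ⟩
  · rintro ⟨S, _, hSind, hℓ⟩
    exact ⟨S, hSind, hℓ⟩
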